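/- Let α, β be irrational numbers in [0,1) and let T, S be the Koopman operators on the circle (with Lebesgue probability measure) of the rotations by α and β respectively. Fix 0<r<1. Then the closure of (I-T)L^r in the L^r metric equals the closure of (I-S)L^r. -/

import Mathlib

open MeasureTheory Filter Topology ENNReal


section Aux

variable {r : ℝ}

private lemma ofReal_abs_rpow (hr0 : 0 < r) (y : ℝ) :
    ENNReal.ofReal (|y| ^ r) = ENNReal.ofReal |y| ^ r :=
  (ENNReal.ofReal_rpow_of_nonneg (abs_nonneg _) hr0.le).symm

private lemma pt_subadd (hr0 : 0 < r) (hr1 : r ≤ 1) (a b : ℝ) :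
    ENNReal.ofReal (|a + b| ^ r) ≤ ENNReal.ofReal (|a| ^ r) + ENNReal.ofReal (|b| ^ r) := by
  rw [ofReal_abs_rpow hr0, ofReal_abs_rpow hr0, ofReal_abs_rpow hr0]
  calc ENNReal.ofReal |a + b| ^ r
      ≤ (ENNReal.ofReal |a| + ENNReal.ofReal |b|) ^ r := by
        refine ENNReal.rpow_le_rpow ?_ hr0.le
        rw [← ENNReal.ofReal_add (abs_nonneg _) (abs_nonneg _)]
        exact ENNReal.ofReal_le_ofReal (abs_add_le a b)
    _ ≤ _ := ENNReal.rpow_add_le_add_rpow _ _ hr0.le hr1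

private lemma measD {u : AddCircle (1 : ℝ) → ℝ} (hu : Measurable u) :
    Measurable fun x => ENNReal.ofReal (|u x| ^ r) :=
  (hu.abs.pow measurable_const).ennreal_ofReal

/-- triangle inequality for the `L^r` "metric". -/
private lemma tri (hr0 : 0 < r) (hr1 : r ≤ 1) {u v w : AddCircle (1 : ℝ) → ℝ}
    (hu : Measurable u) (hv : Measurable v) :
    ∫⁻ x, ENNReal.ofReal (|u x - w x| ^ r) ≤
      (∫⁻ x, ENNReal.ofReal (|u x - v x| ^ r)) + ∫⁻ x, ENNReal.ofReal (|v x - w x| ^ r) := by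
  calc ∫⁻ x, ENNReal.ofReal (|u x - w x| ^ r)
      ≤ ∫⁻ x, (ENNReal.ofReal (|u x - v x| ^ r) + ENNReal.ofReal (|v x - w x| ^ r)) := by
        refine lintegral_mono fun x => ?_
        have h : u x - w x = (u x - v x) + (v x - w x) := by ring
        rw [h]; exact pt_subadd hr0 hr1 _ _
    _ = _ := lintegral_add_left (measD (hu.sub hv)) _

/-- the lintegral is invariant under translation. -/
private lemma Dtrans {u : AddCircle (1 : ℝ) → ℝ} (c : AddCircle (1 : ℝ)) :
    ∫⁻ x, ENNReal.ofReal (|u (x + c)| ^ r) = ∫⁻ x, ENNReal.ofReal (|u x| ^ r) :=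
  lintegral_add_right_eq_self (fun x => ENNReal.ofReal (|u x| ^ r)) c

/-- density of `{j β + k : j k ∈ ℤ}` in `ℝ` for irrational `β`. -/
private lemma dense_real {β : ℝ} (hβ : Irrational β) (x : ℝ) {δ : ℝ} (hδ : 0 < δ) :
    ∃ j k : ℤ, |x - (j * β + k)| < δ := by
  -- first get a small positive element of the subgroup
  obtain ⟨n, hn⟩ := exists_nat_one_div_lt hδ
  obtain ⟨j, k, hk0, -, hjk⟩ := Real.exists_int_int_abs_mul_sub_le β (Nat.succ_pos n)
  set g0 : ℝ := k * β - j with hg0def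
  have hg0ne : g0 ≠ 0 := by
    have : Irrational ((k : ℝ) * β) := hβ.intCast_mul hk0.ne'
    intro h
    exact (this.ne_int j) (by linarith [sub_eq_zero.mp h])
  have hg0small : |g0| < δ := by
    refine lt_of_le_of_lt hjk (lt_of_le_of_lt ?_ hn)
    apply one_div_le_one_div_of_le
    · positivity
    · push_cast; linarith
  -- a positive small element of the form a β + b
  obtain ⟨a, b, hab, habpos⟩ : ∃ a b : ℤ, (a : ℝ) * β + b = |g0| ∧ 0 < |g0| := by
    rcases abs_cases g0 with ⟨h1, -⟩ | ⟨h1, -⟩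
    · exact ⟨k, -j, by rw [h1, hg0def]; push_cast; ring, abs_pos.mpr hg0ne⟩
    · exact ⟨-k, j, by rw [h1, hg0def]; push_cast; ring, abs_pos.mpr hg0ne⟩
  set g : ℝ := |g0|
  set m : ℤ := ⌊x / g⌋ with hm
  refine ⟨m * a, m * b, ?_⟩
  have h1 : (m : ℝ) ≤ x / g := Int.floor_le _
  have h2 : x / g < m + 1 := Int.lt_floor_add_one _
  have hmg1 : (m : ℝ) * g ≤ x := by
    rw [← le_div_iff₀ habpos]; exact h1
  have hmg2 : x < (m : ℝ) * g + g := by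
    have := (div_lt_iff₀ habpos).mp h2; linarith [this]
  have key : ((m * a : ℤ) : ℝ) * β + ((m * b : ℤ) : ℝ) = (m : ℝ) * g := by
    push_cast; rw [← hab]; ring
  rw [key]
  rw [abs_lt]
  constructor <;> nlinarith [habpos, hg0small]

end Aux
section Aux2

variable {r : ℝ}

/-- relate the `L^r` integral to `eLpNorm`. -/
private lemma D_eq_eLpNorm (hr0 : 0 < r) (h : AddCircle (1 : ℝ) → ℝ) :
    ∫⁻ x, ENNReal.ofReal (|h x| ^ r) = eLpNorm h (ENNReal.ofReal r) volume ^ r := by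
  have hp0 : ENNReal.ofReal r ≠ 0 := by
    simp [ENNReal.ofReal_eq_zero, not_le, hr0]
  rw [eLpNorm_eq_lintegral_rpow_enorm_toReal hp0 ENNReal.ofReal_ne_top,
    ENNReal.toReal_ofReal hr0.le, ← ENNReal.rpow_mul, one_div, inv_mul_cancel₀ hr0.ne',
    ENNReal.rpow_one]
  refine lintegral_congr fun x => ?_
  rw [ofReal_abs_rpow hr0]
  congr 1
  rw [← ofReal_norm_eq_enorm, Real.norm_eq_abs]

private lemma exists_small (ε : ℝ≥0∞) (hε : 0 < ε) :
    ∃ η : ℝ≥0∞, 0 < η ∧ η ≠ ⊤ ∧ η + η + η < ε := by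
  rcases eq_or_ne ε ⊤ with rfl | htop
  · exact ⟨1, one_pos, one_ne_top, by norm_num⟩
  · have hne : ε / 4 ≠ ⊤ := (ENNReal.div_lt_top htop (by norm_num)).ne
    refine ⟨ε / 4, ENNReal.div_pos hε.ne' (by norm_num), hne, ?_⟩
    have h4 : ε / 4 + ε / 4 + ε / 4 = 3 * (ε / 4) := by ring
    rw [h4]
    have h34 : (3 : ℝ≥0∞) * (ε / 4) < 4 * (ε / 4) :=
      (ENNReal.mul_lt_mul_left (ENNReal.div_pos hε.ne' (by norm_num)).ne' hne
        (by norm_num))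
    refine h34.trans_le ?_
    rw [ENNReal.mul_div_cancel' (by norm_num) (by norm_num)]

/-- continuity of translation in the `L^r` metric. -/
private lemma trans_cont (hr0 : 0 < r) (hr1 : r ≤ 1) {g : AddCircle (1 : ℝ) → ℝ}
    (hg : Measurable g) (hgD : ∫⁻ x, ENNReal.ofReal (|g x| ^ r) < ⊤)
    {ε : ℝ≥0∞} (hε : 0 < ε) :
    ∃ δ : ℝ, 0 < δ ∧ ∀ t : AddCircle (1 : ℝ), ‖t‖ < δ →
      ∫⁻ x, ENNReal.ofReal (|g (x + t) - g x| ^ r) < ε := by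
  obtain ⟨η, hη0, hηtop, hηε⟩ := exists_small ε hε
  -- `g` is in `ℒ^r`
  have hmem : MemLp g (ENNReal.ofReal r) volume := by
    refine ⟨hg.aestronglyMeasurable, ?_⟩
    rw [lt_top_iff_ne_top]
    intro htop
    rw [D_eq_eLpNorm hr0 g, htop, ENNReal.top_rpow_of_pos hr0] at hgD
    exact (lt_irrefl _ hgD).elim
  -- approximate by a continuous function
  have hδ0 : η ^ (1 / r) ≠ 0 := by
    simp only [ne_eq, ENNReal.rpow_eq_zero_iff, not_or, not_and, not_lt]
    constructor
    · intro h; exact absurd h hη0.ne'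
    · intro h; exact absurd h hηtop
  obtain ⟨c, -, hc_close, hc_cont, -⟩ :=
    hmem.exists_hasCompactSupport_eLpNorm_sub_le ENNReal.ofReal_ne_top hδ0
  have hcm : Measurable c := hc_cont.measurable
  have hDgc : ∫⁻ x, ENNReal.ofReal (|g x - c x| ^ r) ≤ η := by
    have : ∫⁻ x, ENNReal.ofReal (|(g - c) x| ^ r) = eLpNorm (g - c) (ENNReal.ofReal r) volume ^ r :=
      D_eq_eLpNorm hr0 (g - c)
    simp only [Pi.sub_apply] at this
    rw [this]
    calc eLpNorm (g - c) (ENNReal.ofReal r) volume ^ r ≤ (η ^ (1 / r)) ^ r :=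
          ENNReal.rpow_le_rpow hc_close hr0.le
      _ = η := by
          rw [← ENNReal.rpow_mul, one_div, inv_mul_cancel₀ hr0.ne', ENNReal.rpow_one]
  -- uniform continuity of `c`
  have hθ : ∃ θ : ℝ, 0 < θ ∧ ENNReal.ofReal (θ ^ r) ≤ η := by
    refine ⟨η.toReal ^ (1 / r), ?_, ?_⟩
    · exact Real.rpow_pos_of_pos (ENNReal.toReal_pos hη0.ne' hηtop) _
    · rw [← Real.rpow_mul ENNReal.toReal_nonneg, one_div, inv_mul_cancel₀ hr0.ne',
        Real.rpow_one, ENNReal.ofReal_toReal hηtop]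
  obtain ⟨θ, hθ0, hθη⟩ := hθ
  have huc : UniformContinuous c := CompactSpace.uniformContinuous_of_continuous hc_cont
  rw [Metric.uniformContinuous_iff] at huc
  obtain ⟨δ, hδpos, hδc⟩ := huc θ hθ0
  refine ⟨δ, hδpos, fun t ht => ?_⟩
  -- pointwise bound for the continuous part
  have hcpt : ∀ x : AddCircle (1 : ℝ),
      ENNReal.ofReal (|c (x + t) - c x| ^ r) ≤ η := by
    intro x
    have hd : dist (x + t) x < δ := by
      rw [dist_eq_norm, add_sub_cancel_left]; exact ht
    have := hδc hd
    rw [Real.dist_eq] at this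
    refine le_trans ?_ hθη
    exact ENNReal.ofReal_le_ofReal
      (Real.rpow_le_rpow (abs_nonneg _) this.le hr0.le)
  -- decompose
  have hdecomp : ∀ x : AddCircle (1 : ℝ),
      ENNReal.ofReal (|g (x + t) - g x| ^ r) ≤
        ENNReal.ofReal (|(g - c) (x + t)| ^ r) + ENNReal.ofReal (|c (x + t) - c x| ^ r)
          + ENNReal.ofReal (|(g - c) x| ^ r) := by
    intro x
    have h1 : g (x + t) - g x =
        ((g - c) (x + t) + (c (x + t) - c x)) + (-(g - c) x) := by
      simp only [Pi.sub_apply]; ring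
    calc ENNReal.ofReal (|g (x + t) - g x| ^ r)
        ≤ ENNReal.ofReal (|(g - c) (x + t) + (c (x + t) - c x)| ^ r)
            + ENNReal.ofReal (|(-(g - c) x)| ^ r) := by
          rw [h1]; exact pt_subadd hr0 hr1 _ _
      _ ≤ (ENNReal.ofReal (|(g - c) (x + t)| ^ r) + ENNReal.ofReal (|c (x + t) - c x| ^ r))
            + ENNReal.ofReal (|(g - c) x| ^ r) := by
          rw [abs_neg]
          exact add_le_add_left (pt_subadd hr0 hr1 _ _) _
  calc ∫⁻ x, ENNReal.ofReal (|g (x + t) - g x| ^ r)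
      ≤ ∫⁻ x, (ENNReal.ofReal (|(g - c) (x + t)| ^ r) + ENNReal.ofReal (|c (x + t) - c x| ^ r)
          + ENNReal.ofReal (|(g - c) x| ^ r)) := lintegral_mono hdecomp
    _ = (∫⁻ x, ENNReal.ofReal (|(g - c) (x + t)| ^ r))
          + (∫⁻ x, ENNReal.ofReal (|c (x + t) - c x| ^ r))
          + ∫⁻ x, ENNReal.ofReal (|(g - c) x| ^ r) := by
        have m1 : Measurable fun x : AddCircle (1 : ℝ) =>
            ENNReal.ofReal (|(g - c) (x + t)| ^ r) :=
          (measD (hg.sub hcm)).comp (measurable_add_const t)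
        have m2 : Measurable fun x : AddCircle (1 : ℝ) =>
            ENNReal.ofReal (|c (x + t) - c x| ^ r) :=
          measD ((hcm.comp (measurable_add_const t)).sub hcm)
        rw [lintegral_add_left (show Measurable fun x => ENNReal.ofReal (|(g - c) (x + t)| ^ r)
          + ENNReal.ofReal (|c (x + t) - c x| ^ r) from m1.add m2), lintegral_add_left m1]
    _ ≤ η + η + η := by
        refine add_le_add (add_le_add ?_ ?_) ?_
        · rw [show (fun x => ENNReal.ofReal (|(g - c) (x + t)| ^ r)) =
            fun x => (fun y => ENNReal.ofReal (|(g - c) y| ^ r)) (x + t) from rfl,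
            lintegral_add_right_eq_self (fun y => ENNReal.ofReal (|(g - c) y| ^ r)) t]
          simpa only [Pi.sub_apply] using hDgc
        · calc ∫⁻ x, ENNReal.ofReal (|c (x + t) - c x| ^ r) ≤ ∫⁻ _x, η :=
                lintegral_mono hcpt
            _ = η := by
                simp [lintegral_const, AddCircle.measure_univ]
        · simpa only [Pi.sub_apply] using hDgc
    _ < ε := hηε

end Aux2
section Aux3

variable {r : ℝ}

/-- Birkhoff-type sums stay measurable and in `L^r`. -/
private lemma sumD (hr0 : 0 < r) (hr1 : r ≤ 1) {g : AddCircle (1 : ℝ) → ℝ}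
    (hg : Measurable g) (hgD : ∫⁻ x, ENNReal.ofReal (|g x| ^ r) < ⊤)
    (M : ℕ) (c : ℕ → AddCircle (1 : ℝ)) :
    Measurable (fun x => ∑ k ∈ Finset.range M, g (x + c k)) ∧
      (∫⁻ x, ENNReal.ofReal (|∑ k ∈ Finset.range M, g (x + c k)| ^ r)) < ⊤ := by
  induction M with
  | zero =>
      simp only [Finset.range_zero, Finset.sum_empty]
      refine ⟨measurable_const, ?_⟩
      simp [Real.zero_rpow hr0.ne']
  | succ M ih =>
      obtain ⟨ihm, ihD⟩ := ih
      have hnew : Measurable fun x : AddCircle (1 : ℝ) => g (x + c M) :=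
        hg.comp (measurable_add_const _)
      have hmeas : Measurable (fun x => ∑ k ∈ Finset.range (M + 1), g (x + c k)) := by
        simp only [Finset.sum_range_succ]
        exact ihm.add hnew
      refine ⟨hmeas, ?_⟩
      have hb : ∀ x : AddCircle (1 : ℝ),
          ENNReal.ofReal (|∑ k ∈ Finset.range (M + 1), g (x + c k)| ^ r) ≤
            ENNReal.ofReal (|∑ k ∈ Finset.range M, g (x + c k)| ^ r)
              + ENNReal.ofReal (|g (x + c M)| ^ r) := by
        intro x
        rw [Finset.sum_range_succ]
        exact pt_subadd hr0 hr1 _ _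
      calc (∫⁻ x, ENNReal.ofReal (|∑ k ∈ Finset.range (M + 1), g (x + c k)| ^ r))
          ≤ ∫⁻ x, (ENNReal.ofReal (|∑ k ∈ Finset.range M, g (x + c k)| ^ r)
              + ENNReal.ofReal (|g (x + c M)| ^ r)) := lintegral_mono hb
        _ = (∫⁻ x, ENNReal.ofReal (|∑ k ∈ Finset.range M, g (x + c k)| ^ r))
              + ∫⁻ x, ENNReal.ofReal (|g (x + c M)| ^ r) :=
            lintegral_add_left (measD ihm) _
        _ < ⊤ := by
            refine ENNReal.add_lt_top.mpr ⟨ihD, ?_⟩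
            rw [Dtrans (u := g) (c M)]
            exact hgD

/-- construction of the coboundary transfer: `(I - T^n) g` is an honest `T`-coboundary. -/
private lemma cob (hr0 : 0 < r) (hr1 : r ≤ 1) {g : AddCircle (1 : ℝ) → ℝ}
    (hg : Measurable g) (hgD : ∫⁻ x, ENNReal.ofReal (|g x| ^ r) < ⊤)
    (b : AddCircle (1 : ℝ)) (n : ℤ) :
    ∃ h : AddCircle (1 : ℝ) → ℝ, Measurable h ∧
      (∫⁻ x, ENNReal.ofReal (|h x| ^ r) < ⊤) ∧
      ∀ x, h x - h (x + b) = g x - g (x + n • b) := by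
  cases n with
  | ofNat m =>
      obtain ⟨hmeas, hD⟩ := sumD hr0 hr1 hg hgD m (fun k => k • b)
      refine ⟨_, hmeas, hD, fun x => ?_⟩
      have h1 : (∑ k ∈ Finset.range m, g (x + k • b))
          - ∑ k ∈ Finset.range m, g (x + b + k • b)
          = ∑ k ∈ Finset.range m,
              (g (x + k • b) - g (x + (k + 1) • b)) := by
        rw [← Finset.sum_sub_distrib]
        refine Finset.sum_congr rfl fun k _ => ?_
        congr 2
        rw [succ_nsmul]
        abel
      rw [h1, Finset.sum_range_sub' (fun k => g (x + k • b)) m]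
      have h2 : (Int.ofNat m) • b = m • b := by
        simp [natCast_zsmul]
      rw [h2]
      simp [zero_nsmul]
  | negSucc m =>
      obtain ⟨hmeas, hD⟩ := sumD hr0 hr1 hg hgD (m + 1) (fun k => -((k + 1) • b))
      refine ⟨fun x => -∑ k ∈ Finset.range (m + 1), g (x + -((k + 1) • b)),
        hmeas.neg, ?_, fun x => ?_⟩
      · have : ∀ x : AddCircle (1 : ℝ),
            ENNReal.ofReal (|-∑ k ∈ Finset.range (m + 1), g (x + -((k + 1) • b))| ^ r)
              = ENNReal.ofReal (|∑ k ∈ Finset.range (m + 1), g (x + -((k + 1) • b))| ^ r) := by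
          intro x; rw [abs_neg]
        simp only [this]
        exact hD
      · have h1 : (-∑ k ∈ Finset.range (m + 1), g (x + -((k + 1) • b)))
            - -∑ k ∈ Finset.range (m + 1), g (x + b + -((k + 1) • b))
            = ∑ k ∈ Finset.range (m + 1),
                (g (x + b + -((k + 1) • b)) - g (x + -((k + 1) • b))) := by
          rw [neg_sub_neg, ← Finset.sum_sub_distrib]
        rw [h1]
        have h2 : ∀ k ∈ Finset.range (m + 1),
            g (x + b + -((k + 1) • b)) - g (x + -((k + 1) • b))
              = (fun k => g (x + -(k • b))) k - (fun k => g (x + -(k • b))) (k + 1) := by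
          intro k _
          congr 2
          rw [succ_nsmul]
          abel
        rw [Finset.sum_congr rfl h2, Finset.sum_range_sub' (fun k => g (x + -(k • b))) (m + 1)]
        have h3 : (Int.negSucc m) • b = -((m + 1) • b) := by
          rw [negSucc_zsmul]
        rw [h3]
        simp [zero_nsmul]

end Aux3
private lemma oneDir (α β : ℝ) (hβ : Irrational β) (r : ℝ) (hr0 : 0 < r) (hr1 : r < 1)
    (f : AddCircle (1 : ℝ) → ℝ) (hf : Measurable f)
    (H : ∀ ε : ℝ≥0∞, 0 < ε → ∃ g : AddCircle (1 : ℝ) → ℝ, Measurable g ∧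
        (∫⁻ x, ENNReal.ofReal (|g x| ^ r) < ⊤) ∧
        ∫⁻ x, ENNReal.ofReal (|f x - (g x - g (x + (α : AddCircle (1 : ℝ))))| ^ r) < ε) :
    ∀ ε : ℝ≥0∞, 0 < ε → ∃ g : AddCircle (1 : ℝ) → ℝ, Measurable g ∧
        (∫⁻ x, ENNReal.ofReal (|g x| ^ r) < ⊤) ∧
        ∫⁻ x, ENNReal.ofReal (|f x - (g x - g (x + (β : AddCircle (1 : ℝ))))| ^ r) < ε := by
  intro ε hε
  have hε2 : (0 : ℝ≥0∞) < ε / 2 := ENNReal.half_pos hε.ne'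
  obtain ⟨g, hg, hgD, hclose⟩ := H (ε / 2) hε2
  obtain ⟨δ, hδ0, hδ⟩ := trans_cont hr0 hr1.le hg hgD hε2
  obtain ⟨j, k, hjk⟩ := dense_real hβ α hδ0
  set αc : AddCircle (1 : ℝ) := (α : AddCircle (1 : ℝ)) with hαc
  set βc : AddCircle (1 : ℝ) := (β : AddCircle (1 : ℝ)) with hβc
  set u : AddCircle (1 : ℝ) := ((α - (j * β + k) : ℝ) : AddCircle (1 : ℝ)) with hu
  have hnorm : ‖u‖ < δ := by
    refine lt_of_le_of_lt ?_ hjk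
    have h0 : ‖u‖ ≤ ‖(α - (j * β + k) : ℝ)‖ := QuotientAddGroup.norm_mk_le_norm
    rw [Real.norm_eq_abs] at h0
    exact h0
  -- `j • βc + u = αc`
  have hk0 : (((k : ℝ)) : AddCircle (1 : ℝ)) = 0 := by
    have h1 : ((k : ℝ)) = k • (1 : ℝ) := by simp [zsmul_eq_mul]
    rw [h1, AddCircle.coe_zsmul, AddCircle.coe_period, smul_zero]
  have hjb : j • βc = (((j * β : ℝ)) : AddCircle (1 : ℝ)) := by
    rw [hβc, ← AddCircle.coe_zsmul]
    simp [zsmul_eq_mul]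
  have hsum : ∀ x : AddCircle (1 : ℝ), x + j • βc + u = x + αc := by
    intro x
    have h2 : j • βc + u = αc := by
      rw [hjb, hu, hαc]
      -- reduce to an identity of real representatives
      have h3 : (((j * β : ℝ)) : AddCircle (1 : ℝ)) + ((α - (j * β + k) : ℝ) : AddCircle (1 : ℝ))
          = ((α - k : ℝ) : AddCircle (1 : ℝ)) := by
        rw [← AddCircle.coe_add]
        congr 1
        ring
      rw [h3]
      have h4 : ((α - k : ℝ) : AddCircle (1 : ℝ))
          = ((α : ℝ) : AddCircle (1 : ℝ)) - (((k : ℝ)) : AddCircle (1 : ℝ)) :=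
        AddCircle.coe_sub _ _ _
      rw [h4, hk0, sub_zero]
    rw [add_assoc, h2]
  -- the key distance estimate
  have hdist : (∫⁻ x, ENNReal.ofReal (|g (x + αc) - g (x + j • βc)| ^ r)) < ε / 2 := by
    have heq : (∫⁻ x, ENNReal.ofReal (|g (x + αc) - g (x + j • βc)| ^ r))
        = ∫⁻ y, ENNReal.ofReal (|g (y + u) - g y| ^ r) := by
      rw [← lintegral_add_right_eq_self
        (fun y => ENNReal.ofReal (|g (y + u) - g y| ^ r)) (j • βc)]
      refine lintegral_congr fun x => ?_
      rw [hsum x]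
    rw [heq]
    exact hδ u hnorm
  obtain ⟨h, hh, hhD, hhEq⟩ := cob hr0 hr1.le hg hgD βc j
  refine ⟨h, hh, hhD, ?_⟩
  have hstep : (∫⁻ x, ENNReal.ofReal (|f x - (h x - h (x + βc))| ^ r))
      = ∫⁻ x, ENNReal.ofReal (|f x - (g x - g (x + j • βc))| ^ r) := by
    refine lintegral_congr fun x => ?_
    rw [hhEq x]
  rw [hstep]
  have htri := tri (u := f) (v := fun x => g x - g (x + αc))
    (w := fun x => g x - g (x + j • βc)) hr0 hr1.le hf
    (hg.sub (hg.comp (measurable_add_const αc)))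
  refine lt_of_le_of_lt htri ?_
  have hsecond : (∫⁻ x, ENNReal.ofReal
      (|(g x - g (x + αc)) - (g x - g (x + j • βc))| ^ r)) < ε / 2 := by
    refine lt_of_le_of_lt (le_of_eq ?_) hdist
    refine lintegral_congr fun x => ?_
    congr 1
    congr 1
    rw [abs_sub_comm]
    congr 1
    ring
  calc (∫⁻ x, ENNReal.ofReal (|f x - (g x - g (x + αc))| ^ r))
        + ∫⁻ x, ENNReal.ofReal (|(g x - g (x + αc)) - (g x - g (x + j • βc))| ^ r)
      < ε / 2 + ε / 2 := ENNReal.add_lt_add hclose hsecond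
    _ = ε := ENNReal.add_halves ε

/-- For two irrational rotations `T`, `S` of the circle, and `0 < r < 1`,
the `L^r`-closures of `(I-T)L^r` and `(I-S)L^r` coincide: a function `f ∈ L^r` can be
approximated in the `L^r` metric by `T`-coboundaries iff it can be approximated by
`S`-coboundaries. -/
theorem stmt5 (α β : ℝ) (hα : Irrational α) (hβ : Irrational β)
    (r : ℝ) (hr0 : 0 < r) (hr1 : r < 1)
    (f : AddCircle (1 : ℝ) → ℝ) (hf : Measurable f)
    (hfLr : ∫⁻ x, ENNReal.ofReal (|f x| ^ r) < ⊤) :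
    ((∀ ε : ℝ≥0∞, 0 < ε → ∃ g : AddCircle (1 : ℝ) → ℝ, Measurable g ∧
        (∫⁻ x, ENNReal.ofReal (|g x| ^ r) < ⊤) ∧
        ∫⁻ x, ENNReal.ofReal (|f x - (g x - g (x + (α : AddCircle (1 : ℝ))))| ^ r) < ε) ↔
      (∀ ε : ℝ≥0∞, 0 < ε → ∃ g : AddCircle (1 : ℝ) → ℝ, Measurable g ∧
        (∫⁻ x, ENNReal.ofReal (|g x| ^ r) < ⊤) ∧
        ∫⁻ x, ENNReal.ofReal (|f x - (g x - g (x + (β : AddCircle (1 : ℝ))))| ^ r) < ε)) := 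
  ⟨fun H => oneDir α β hβ r hr0 hr1 f hf H, fun H => oneDir β α hα r hr0 hr1 f hf H⟩
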